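/- Identify the power set 2^{F_8} with the F_2-vector space F_2^8 under symmetric difference, with the bilinear form β(X,Y) = |X ∩ Y| mod 2. For nonzero z ∈ F_8, let O_z be the set of 4-element subsets X with Σ_{x∈X} x = z, and let span(O_z) be the F_2-linear span of O_z. Then span(O_z) is a 4-dimensional subspace that is maximal isotropic: span(O_z) = span(O_z)^⊥. -/

import Mathlib

open scoped Classical
noncomputable section

abbrev F8 := GaloisField 2 3

instance : Fintype F8 := Fintype.ofFinite F8

/-- The indicator function of a finite subset of `F8`, as a vector in `F₂⁸`. -/
def ind (X : Finset F8) : F8 → ZMod 2 := fun w => if w ∈ X then 1 else 0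

lemma F8.card : Fintype.card F8 = 8 :=
  by rw [← Nat.card_eq_fintype_card]; exact GaloisField.card 2 3 (by norm_num)

lemma F8.two : (2 : F8) = 0 := by exact_mod_cast CharP.cast_eq_zero F8 2

lemma F8.add_self (x : F8) : x + x = 0 := by linear_combination x * F8.two

lemma flip_mem {z : F8} (hz : z ≠ 0) {X : Finset F8} (h4 : X.card = 4)
    (hs : ∑ x ∈ X, x = z) : ∀ x : F8, x ∈ X ↔ x + z ∉ X := by
  have fwd : ∀ x ∈ X, x + z ∉ X := by
    intro x hx hxz
    have hne : x ≠ x + z := by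
      intro h; exact hz (by linear_combination -h)
    set X' := (X.erase x).erase (x + z) with hX'
    have hmem : x + z ∈ X.erase x := Finset.mem_erase.2 ⟨hne.symm, hxz⟩
    have hcard : X'.card = 2 := by
      rw [hX', Finset.card_erase_of_mem hmem, Finset.card_erase_of_mem hx, h4]
    obtain ⟨a, b, hab, hab2⟩ := Finset.card_eq_two.1 hcard
    have e1 : (x + z) + ∑ u ∈ X', u = ∑ u ∈ X.erase x, u :=
      Finset.add_sum_erase _ (fun u => u) hmem
    have e2 : x + ∑ u ∈ X.erase x, u = ∑ u ∈ X, u :=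
      Finset.add_sum_erase _ (fun u => u) hx
    have hsum : x + ((x + z) + ∑ u ∈ X', u) = z := by rw [e1, e2, hs]
    rw [hab2, Finset.sum_pair hab] at hsum
    exact hab (by linear_combination hsum - (x + b) * F8.two)
  intro x
  constructor
  · exact fun hx => fwd x hx
  · intro hnot
    by_contra hxX
    have hinj : Function.Injective (fun u : F8 => u + z) := add_left_injective z
    have hdisj : Disjoint X (X.image (fun u => u + z)) := by
      rw [Finset.disjoint_left]
      rintro y hy hy2
      obtain ⟨w, hw, rfl⟩ := Finset.mem_image.1 hy2
      exact fwd w hw hy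
    have huniv : X ∪ X.image (fun u => u + z) = Finset.univ := by
      apply Finset.eq_univ_of_card
      rw [Finset.card_union_of_disjoint hdisj, Finset.card_image_of_injective _ hinj,
        h4, F8.card]
    have : x ∈ X ∪ X.image (fun u => u + z) := huniv ▸ Finset.mem_univ x
    rcases Finset.mem_union.1 this with h | h
    · exact hxX h
    · obtain ⟨w, hw, hwz⟩ := Finset.mem_image.1 h
      have : x + z = w := by linear_combination -hwz + z * F8.two
      exact hnot (this ▸ hw)

lemma inter_card_even {z : F8} (hz : z ≠ 0) {X Y : Finset F8} (hX4 : X.card = 4)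
    (hXs : ∑ x ∈ X, x = z) (hY4 : Y.card = 4) (hYs : ∑ x ∈ Y, x = z) :
    2 ∣ (X ∩ Y).card := by
  have fX := flip_mem hz hX4 hXs
  have fY := flip_mem hz hY4 hYs
  set T := X.filter (fun x => x + z ∈ Y) with hT
  have hzz : ∀ u : F8, u + z + z = u := fun u => by linear_combination z * F8.two
  have hsplit : X ∩ Y ∪ T = X := by
    ext u
    simp only [hT, Finset.mem_union, Finset.mem_inter, Finset.mem_filter]
    constructor
    · rintro (⟨h, _⟩ | ⟨h, _⟩) <;> exact h
    · intro hu
      by_cases huY : u ∈ Y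
      · exact Or.inl ⟨hu, huY⟩
      · exact Or.inr ⟨hu, by by_contra h; exact huY ((fY u).2 h)⟩
  have hdisj : Disjoint (X ∩ Y) T := by
    rw [Finset.disjoint_left]
    intro u hu huT
    exact ((fY u).1 (Finset.mem_inter.1 hu).2) (Finset.mem_filter.1 huT).2
  set T' := T.image (fun u => u + z) with hT'
  have hT'eq : T' = Y.filter (fun y => y + z ∈ X) := by
    ext y
    simp only [hT', hT, Finset.mem_image, Finset.mem_filter]
    constructor
    · rintro ⟨u, ⟨huX, huY⟩, rfl⟩
      exact ⟨huY, by rw [hzz]; exact huX⟩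
    · rintro ⟨hyY, hyzX⟩
      exact ⟨y + z, ⟨hyzX, by rw [hzz]; exact hyY⟩, hzz y⟩
  have hsplitY : X ∩ Y ∪ T' = Y := by
    rw [hT'eq]; ext u
    simp only [Finset.mem_union, Finset.mem_inter, Finset.mem_filter]
    constructor
    · rintro (⟨_, h⟩ | ⟨h, _⟩) <;> exact h
    · intro hu
      by_cases huX : u ∈ X
      · exact Or.inl ⟨huX, hu⟩
      · exact Or.inr ⟨hu, by by_contra h; exact huX ((fX u).2 h)⟩
  have hdisjY : Disjoint (X ∩ Y) T' := by
    rw [hT'eq, Finset.disjoint_left]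
    intro u hu huT
    exact ((fX u).1 (Finset.mem_inter.1 hu).1) (Finset.mem_filter.1 huT).2
  have hs1 : ∑ u ∈ X ∩ Y, u + ∑ u ∈ T, u = z := by
    rw [← Finset.sum_union hdisj, hsplit, hXs]
  have hs2 : ∑ u ∈ X ∩ Y, u + ∑ u ∈ T', u = z := by
    rw [← Finset.sum_union hdisjY, hsplitY, hYs]
  have hs3 : ∑ u ∈ T', u = ∑ u ∈ T, u + T.card • z := by
    rw [hT', Finset.sum_image (fun a _ b _ h => add_left_injective z h)]
    rw [Finset.sum_add_distrib, Finset.sum_const]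
  rw [nsmul_eq_mul] at hs3
  have hsmul : (T.card : F8) * z = 0 := by linear_combination hs2 - hs1 - hs3
  have hcast : (T.card : F8) = 0 := by
    rcases mul_eq_zero.1 hsmul with h | h
    · exact h
    · exact absurd h hz
  have hdvd : 2 ∣ T.card := (CharP.cast_eq_zero_iff F8 2 T.card).1 hcast
  have hcards : (X ∩ Y).card + T.card = 4 := by
    rw [← Finset.card_union_of_disjoint hdisj, hsplit, hX4]
  omega

lemma sum_ind (X Y : Finset F8) :
    ∑ w : F8, ind X w * ind Y w = ((X ∩ Y).card : ZMod 2) := by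
  simp only [ind, ite_mul, zero_mul, one_mul, ← ite_and]
  rw [Finset.sum_boole]
  congr 1
  rw [show Finset.univ.filter (fun w => w ∈ X ∧ w ∈ Y) = X ∩ Y by
    ext w; simp [Finset.mem_inter]]

lemma card4 {p q r s : F8} (h1 : p ≠ q) (h2 : p ≠ r) (h3 : p ≠ s)
    (h4 : q ≠ r) (h5 : q ≠ s) (h6 : r ≠ s) : ({p, q, r, s} : Finset F8).card = 4 := by
  rw [Finset.card_insert_of_notMem (by simp [h1, h2, h3]),
    Finset.card_insert_of_notMem (by simp [h4, h5]), Finset.card_pair h6]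

lemma sum4 {p q r s : F8} (h1 : p ≠ q) (h2 : p ≠ r) (h3 : p ≠ s)
    (h4 : q ≠ r) (h5 : q ≠ s) (h6 : r ≠ s) :
    ∑ x ∈ ({p, q, r, s} : Finset F8), x = p + q + r + s := by
  rw [Finset.sum_insert (by simp [h1, h2, h3]), Finset.sum_insert (by simp [h4, h5]),
    Finset.sum_pair h6]
  ring

def betaForm : LinearMap.BilinForm (ZMod 2) (F8 → ZMod 2) :=
  LinearMap.mk₂ (ZMod 2) (fun f g => ∑ w : F8, f w * g w)
    (fun f f' g => by simp [add_mul, Finset.sum_add_distrib])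
    (fun c f g => by simp [Finset.mul_sum, mul_assoc])
    (fun f g g' => by simp [mul_add, Finset.sum_add_distrib])
    (fun c f g => by simp [Finset.mul_sum, mul_left_comm, mul_assoc, mul_comm])

lemma betaForm_apply (f g : F8 → ZMod 2) : betaForm f g = ∑ w : F8, f w * g w := rfl

lemma betaForm_refl : betaForm.IsRefl := by
  intro f g h
  rw [betaForm_apply] at h ⊢
  rw [← h]
  exact Finset.sum_congr rfl fun w _ => mul_comm _ _

lemma betaForm_nondeg : betaForm.Nondegenerate := by
  refine (LinearMap.IsRefl.nondegenerate_iff_separatingLeft betaForm_refl).2 ?_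
  intro f hf
  funext w
  have h := hf (Pi.single w 1)
  rw [betaForm_apply] at h
  simpa [Pi.single_apply, mul_ite, mul_one, mul_zero] using h

theorem span_outer_sets_maximal_isotropic (z : F8) (hz : z ≠ 0) :
    let Oz : Set (F8 → ZMod 2) :=
      {f | ∃ X : Finset F8, X.card = 4 ∧ ∑ x ∈ X, x = z ∧ f = ind X}
    Module.finrank (ZMod 2) (Submodule.span (ZMod 2) Oz) = 4 ∧
    (∀ g : F8 → ZMod 2, g ∈ Submodule.span (ZMod 2) Oz ↔
      ∀ f ∈ Submodule.span (ZMod 2) Oz, ∑ w : F8, f w * g w = 0) := by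
  intro Oz
  obtain ⟨a, ha⟩ : ∃ a : F8, a ∉ ({0, z} : Finset F8) := by
    by_contra h
    push_neg at h
    have hsub : (Finset.univ : Finset F8) ⊆ {0, z} := fun u _ => h u
    have h1 := Finset.card_le_card hsub
    rw [Finset.card_univ, F8.card] at h1
    have h2 : ({0, z} : Finset F8).card ≤ 2 :=
      (Finset.card_insert_le _ _).trans (by simp)
    omega
  obtain ⟨b, hb⟩ : ∃ b : F8, b ∉ ({0, z, a, a + z} : Finset F8) := by
    by_contra h
    push_neg at h
    have hsub : (Finset.univ : Finset F8) ⊆ {0, z, a, a + z} := fun u _ => h u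
    have h1 := Finset.card_le_card hsub
    rw [Finset.card_univ, F8.card] at h1
    have h2 : ({0, z, a, a + z} : Finset F8).card ≤ 4 :=
      (Finset.card_insert_le _ _).trans (by
        have := (Finset.card_insert_le z ({a, a+z} : Finset F8))
        have := (Finset.card_insert_le a ({a+z} : Finset F8))
        simp at *
        omega)
    omega
  simp only [Finset.mem_insert, Finset.mem_singleton, not_or] at ha hb
  obtain ⟨ha0, haz⟩ := ha
  obtain ⟨hb0, hbz, hba, hbaz⟩ := hb
  have nz_a : a ≠ 0 := ha0
  have nz_az : a + z ≠ 0 := fun h => haz (by linear_combination h - z * F8.two)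
  have nz_b : b ≠ 0 := hb0
  have nz_bz : b + z ≠ 0 := fun h => hbz (by linear_combination h - z * F8.two)
  have nz_ab : a + b ≠ 0 := fun h => hba (by linear_combination h - a * F8.two)
  have nz_abz : a + b + z ≠ 0 := fun h => hbaz (by linear_combination h - (a + z) * F8.two)
  have ne_zero_z : (0:F8) ≠ z := fun h => hz (by linear_combination h + (z) * F8.two)
  have ne_zero_a : (0:F8) ≠ a := fun h => nz_a (by linear_combination h + (a) * F8.two)
  have ne_zero_az : (0:F8) ≠ (a+z) := fun h => nz_az (by linear_combination h + (z + a) * F8.two)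
  have ne_zero_b : (0:F8) ≠ b := fun h => nz_b (by linear_combination h + (b) * F8.two)
  have ne_zero_bz : (0:F8) ≠ (b+z) := fun h => nz_bz (by linear_combination h + (z + b) * F8.two)
  have ne_zero_ab : (0:F8) ≠ (a+b) := fun h => nz_ab (by linear_combination h + (a + b) * F8.two)
  have ne_zero_abz : (0:F8) ≠ (a+b+z) := fun h => nz_abz (by linear_combination h + (z + a + b) * F8.two)
  have ne_z_zero : z ≠ (0:F8) := fun h => hz (by linear_combination h)
  have ne_z_a : z ≠ a := fun h => nz_az (by linear_combination h + (a) * F8.two)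
  have ne_z_az : z ≠ (a+z) := fun h => nz_a (by linear_combination h + (a) * F8.two)
  have ne_z_b : z ≠ b := fun h => nz_bz (by linear_combination h + (b) * F8.two)
  have ne_z_bz : z ≠ (b+z) := fun h => nz_b (by linear_combination h + (b) * F8.two)
  have ne_z_ab : z ≠ (a+b) := fun h => nz_abz (by linear_combination h + (a + b) * F8.two)
  have ne_z_abz : z ≠ (a+b+z) := fun h => nz_ab (by linear_combination h + (a + b) * F8.two)
  have ne_a_zero : a ≠ (0:F8) := fun h => nz_a (by linear_combination h)
  have ne_a_z : a ≠ z := fun h => nz_az (by linear_combination h + (z) * F8.two)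
  have ne_a_az : a ≠ (a+z) := fun h => hz (by linear_combination h + (z) * F8.two)
  have ne_a_b : a ≠ b := fun h => nz_ab (by linear_combination h + (b) * F8.two)
  have ne_a_bz : a ≠ (b+z) := fun h => nz_abz (by linear_combination h + (z + b) * F8.two)
  have ne_a_ab : a ≠ (a+b) := fun h => nz_b (by linear_combination h + (b) * F8.two)
  have ne_a_abz : a ≠ (a+b+z) := fun h => nz_bz (by linear_combination h + (z + b) * F8.two)
  have ne_az_zero : (a+z) ≠ (0:F8) := fun h => nz_az (by linear_combination h)
  have ne_az_z : (a+z) ≠ z := fun h => nz_a (by linear_combination h)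
  have ne_az_a : (a+z) ≠ a := fun h => hz (by linear_combination h)
  have ne_az_b : (a+z) ≠ b := fun h => nz_abz (by linear_combination h + (b) * F8.two)
  have ne_az_bz : (a+z) ≠ (b+z) := fun h => nz_ab (by linear_combination h + (b) * F8.two)
  have ne_az_ab : (a+z) ≠ (a+b) := fun h => nz_bz (by linear_combination h + (b) * F8.two)
  have ne_az_abz : (a+z) ≠ (a+b+z) := fun h => nz_b (by linear_combination h + (b) * F8.two)
  have ne_b_zero : b ≠ (0:F8) := fun h => nz_b (by linear_combination h)
  have ne_b_z : b ≠ z := fun h => nz_bz (by linear_combination h + (z) * F8.two)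
  have ne_b_a : b ≠ a := fun h => nz_ab (by linear_combination h + (a) * F8.two)
  have ne_b_az : b ≠ (a+z) := fun h => nz_abz (by linear_combination h + (z + a) * F8.two)
  have ne_b_bz : b ≠ (b+z) := fun h => hz (by linear_combination h + (z) * F8.two)
  have ne_b_ab : b ≠ (a+b) := fun h => nz_a (by linear_combination h + (a) * F8.two)
  have ne_b_abz : b ≠ (a+b+z) := fun h => nz_az (by linear_combination h + (z + a) * F8.two)
  have ne_bz_zero : (b+z) ≠ (0:F8) := fun h => nz_bz (by linear_combination h)
  have ne_bz_z : (b+z) ≠ z := fun h => nz_b (by linear_combination h)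
  have ne_bz_a : (b+z) ≠ a := fun h => nz_abz (by linear_combination h + (a) * F8.two)
  have ne_bz_az : (b+z) ≠ (a+z) := fun h => nz_ab (by linear_combination h + (a) * F8.two)
  have ne_bz_b : (b+z) ≠ b := fun h => hz (by linear_combination h)
  have ne_bz_ab : (b+z) ≠ (a+b) := fun h => nz_az (by linear_combination h + (a) * F8.two)
  have ne_bz_abz : (b+z) ≠ (a+b+z) := fun h => nz_a (by linear_combination h + (a) * F8.two)
  have ne_ab_zero : (a+b) ≠ (0:F8) := fun h => nz_ab (by linear_combination h)
  have ne_ab_z : (a+b) ≠ z := fun h => nz_abz (by linear_combination h + (z) * F8.two)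
  have ne_ab_a : (a+b) ≠ a := fun h => nz_b (by linear_combination h)
  have ne_ab_az : (a+b) ≠ (a+z) := fun h => nz_bz (by linear_combination h + (z) * F8.two)
  have ne_ab_b : (a+b) ≠ b := fun h => nz_a (by linear_combination h)
  have ne_ab_bz : (a+b) ≠ (b+z) := fun h => nz_az (by linear_combination h + (z) * F8.two)
  have ne_ab_abz : (a+b) ≠ (a+b+z) := fun h => hz (by linear_combination h + (z) * F8.two)
  have ne_abz_zero : (a+b+z) ≠ (0:F8) := fun h => nz_abz (by linear_combination h)
  have ne_abz_z : (a+b+z) ≠ z := fun h => nz_ab (by linear_combination h)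
  have ne_abz_a : (a+b+z) ≠ a := fun h => nz_bz (by linear_combination h)
  have ne_abz_az : (a+b+z) ≠ (a+z) := fun h => nz_b (by linear_combination h)
  have ne_abz_b : (a+b+z) ≠ b := fun h => nz_az (by linear_combination h)
  have ne_abz_bz : (a+b+z) ≠ (b+z) := fun h => nz_a (by linear_combination h)
  have ne_abz_ab : (a+b+z) ≠ (a+b) := fun h => hz (by linear_combination h)
  set X1 : Finset F8 := {z, a, b, a + b} with hX1
  set X2 : Finset F8 := {0, a + z, b, a + b} with hX2
  set X3 : Finset F8 := {0, a, b + z, a + b} with hX3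
  set X4 : Finset F8 := {0, a, b, a + b + z} with hX4
  have c1 : X1.card = 4 := by
    rw [hX1]; exact card4 ne_z_a ne_z_b ne_z_ab ne_a_b ne_a_ab ne_b_ab
  have c2 : X2.card = 4 := by
    rw [hX2]; exact card4 ne_zero_az ne_zero_b ne_zero_ab ne_az_b ne_az_ab ne_b_ab
  have c3 : X3.card = 4 := by
    rw [hX3]; exact card4 ne_zero_a ne_zero_bz ne_zero_ab ne_a_bz ne_a_ab ne_bz_ab
  have c4 : X4.card = 4 := by
    rw [hX4]; exact card4 ne_zero_a ne_zero_b ne_zero_abz ne_a_b ne_a_abz ne_b_abz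
  have s1 : ∑ x ∈ X1, x = z := by
    rw [hX1, sum4 ne_z_a ne_z_b ne_z_ab ne_a_b ne_a_ab ne_b_ab]
    linear_combination (a + b) * F8.two
  have s2 : ∑ x ∈ X2, x = z := by
    rw [hX2, sum4 ne_zero_az ne_zero_b ne_zero_ab ne_az_b ne_az_ab ne_b_ab]
    linear_combination (a + b) * F8.two
  have s3 : ∑ x ∈ X3, x = z := by
    rw [hX3, sum4 ne_zero_a ne_zero_bz ne_zero_ab ne_a_bz ne_a_ab ne_bz_ab]
    linear_combination (a + b) * F8.two
  have s4 : ∑ x ∈ X4, x = z := by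
    rw [hX4, sum4 ne_zero_a ne_zero_b ne_zero_abz ne_a_b ne_a_abz ne_b_abz]
    linear_combination (a + b) * F8.two
  have m1 : z ∈ X1 := by rw [hX1]; simp
  have m2 : a + z ∈ X2 := by rw [hX2]; simp
  have m3 : b + z ∈ X3 := by rw [hX3]; simp
  have m4 : a + b + z ∈ X4 := by rw [hX4]; simp
  have n12 : z ∉ X2 := by rw [hX2]; simp [hz, ne_z_az, ne_z_b, ne_z_ab]
  have n13 : z ∉ X3 := by rw [hX3]; simp [hz, ne_z_a, ne_z_bz, ne_z_ab]
  have n14 : z ∉ X4 := by rw [hX4]; simp [hz, ne_z_a, ne_z_b, ne_z_abz]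
  have n21 : a + z ∉ X1 := by rw [hX1]; simp [ne_az_z, ne_az_a, ne_az_b, ne_az_ab]
  have n23 : a + z ∉ X3 := by rw [hX3]; simp [nz_az, ne_az_a, ne_az_bz, ne_az_ab]
  have n24 : a + z ∉ X4 := by rw [hX4]; simp [nz_az, ne_az_a, ne_az_b, ne_az_abz]
  have n31 : b + z ∉ X1 := by rw [hX1]; simp [ne_bz_z, ne_bz_a, ne_bz_b, ne_bz_ab]
  have n32 : b + z ∉ X2 := by rw [hX2]; simp [nz_bz, ne_bz_az, ne_bz_b, ne_bz_ab]
  have n34 : b + z ∉ X4 := by rw [hX4]; simp [nz_bz, ne_bz_a, ne_bz_b, ne_bz_abz]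
  have n41 : a + b + z ∉ X1 := by rw [hX1]; simp [ne_abz_z, ne_abz_a, ne_abz_b, ne_abz_ab]
  have n42 : a + b + z ∉ X2 := by rw [hX2]; simp [nz_abz, ne_abz_az, ne_abz_b, ne_abz_ab]
  have n43 : a + b + z ∉ X3 := by rw [hX3]; simp [nz_abz, ne_abz_a, ne_abz_bz, ne_abz_ab]
  set S := Submodule.span (ZMod 2) Oz with hS
  have hiso : ∀ f ∈ Oz, ∀ g ∈ Oz, betaForm f g = 0 := by
    rintro f ⟨X, hX4', hXs, rfl⟩ g ⟨Y, hY4', hYs, rfl⟩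
    rw [betaForm_apply, sum_ind]
    exact (CharP.cast_eq_zero_iff (ZMod 2) 2 _).2 (inter_card_even hz hX4' hXs hY4' hYs)
  have hle : S ≤ betaForm.orthogonal S := by
    rw [hS, Submodule.span_le]
    intro g hg
    rw [SetLike.mem_coe, LinearMap.BilinForm.mem_orthogonal_iff]
    intro f hf
    have hker : Submodule.span (ZMod 2) Oz ≤ LinearMap.ker (betaForm.flip g) := by
      rw [Submodule.span_le]
      intro f' hf'
      rw [SetLike.mem_coe, LinearMap.mem_ker]
      exact hiso f' hf' g hg
    have h0 := hker hf
    rw [LinearMap.mem_ker] at h0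
    exact h0
  have hdim : Module.finrank (ZMod 2) (F8 → ZMod 2) = 8 := by
    rw [Module.finrank_pi, F8.card]
  have hli : LinearIndependent (ZMod 2) ![ind X1, ind X2, ind X3, ind X4] := by
    rw [Fintype.linearIndependent_iff]
    intro c hc
    have expand : ∀ w : F8, (∑ i : Fin 4, c i • ![ind X1, ind X2, ind X3, ind X4] i) w
        = c 0 * ind X1 w + c 1 * ind X2 w + c 2 * ind X3 w + c 3 * ind X4 w := by
      intro w
      rw [Fin.sum_univ_four]
      simp [mul_comm]
    have e0 : c 0 = 0 := by
      have h := congrFun hc z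
      rw [expand] at h
      simp only [ind, if_pos m1, if_neg n12, if_neg n13, if_neg n14] at h
      simpa using h
    have e1 : c 1 = 0 := by
      have h := congrFun hc (a + z)
      rw [expand] at h
      simp only [ind, if_pos m2, if_neg n21, if_neg n23, if_neg n24] at h
      simpa using h
    have e2 : c 2 = 0 := by
      have h := congrFun hc (b + z)
      rw [expand] at h
      simp only [ind, if_pos m3, if_neg n31, if_neg n32, if_neg n34] at h
      simpa using h
    have e3 : c 3 = 0 := by
      have h := congrFun hc (a + b + z)
      rw [expand] at h
      simp only [ind, if_pos m4, if_neg n41, if_neg n42, if_neg n43] at h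
      simpa using h
    intro i
    fin_cases i
    · exact e0
    · exact e1
    · exact e2
    · exact e3
  have hsub : Submodule.span (ZMod 2) (Set.range ![ind X1, ind X2, ind X3, ind X4]) ≤ S := by
    rw [hS, Submodule.span_le]
    rintro x ⟨i, rfl⟩
    fin_cases i
    · exact Submodule.subset_span ⟨X1, c1, s1, rfl⟩
    · exact Submodule.subset_span ⟨X2, c2, s2, rfl⟩
    · exact Submodule.subset_span ⟨X3, c3, s3, rfl⟩
    · exact Submodule.subset_span ⟨X4, c4, s4, rfl⟩
  have hfr4 : 4 ≤ Module.finrank (ZMod 2) S := by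
    have hcard := finrank_span_eq_card hli
    simp only [Fintype.card_fin] at hcard
    have hmono := Submodule.finrank_mono hsub
    omega
  have hfr_orth : Module.finrank (ZMod 2) (betaForm.orthogonal S)
      = 8 - Module.finrank (ZMod 2) S := by
    rw [LinearMap.BilinForm.finrank_orthogonal betaForm_nondeg, hdim]
  have hle_fr := Submodule.finrank_mono hle
  have hfr_le : Module.finrank (ZMod 2) S ≤ 8 := by
    have := Submodule.finrank_le S
    omega
  have hfr : Module.finrank (ZMod 2) S = 4 := by omega
  have heq : S = betaForm.orthogonal S :=
    Submodule.eq_of_le_of_finrank_eq hle (by omega)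
  refine ⟨hfr, fun g => ?_⟩
  constructor
  · intro hg f hf
    have h2 : g ∈ betaForm.orthogonal S := heq ▸ hg
    exact (LinearMap.BilinForm.mem_orthogonal_iff.1 h2) f hf
  · intro hcond
    rw [show S = betaForm.orthogonal S from heq, LinearMap.BilinForm.mem_orthogonal_iff]
    intro f hf
    exact hcond f hf
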